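/- Let m ≥ 2 and let 1 ≤ d_1 ≤ d_2 ≤ … ≤ d_m be integers, and set d = d_1 + … + d_m. Write f = ∏_{i=1}^m f_{d_i} = ∑_{i=0}^d a_i t^i. Then f is symmetric, and either f is strictly unimodal, or the coefficients a_i are strictly increasing for 0 ≤ i ≤ d_1 + … + d_{m-1}, constant for d_1 + … + d_{m-1} ≤ i ≤ d_m, and strictly decreasing for d_m ≤ i ≤ d. -/

import Mathlib

open Polynomial

/-- `fpoly d` is the polynomial `f_d = 1 + t + t^2 + ⋯ + t^d`. -/
noncomputable def fpoly (d : ℕ) : Polynomial ℝ :=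
  ∑ i ∈ Finset.range (d + 1), Polynomial.X ^ i

/-- A sequence `a_0, …, a_d` is strictly unimodal if, for `d = 2m`,
`a_0 < a_1 < ⋯ < a_m > a_{m+1} > ⋯ > a_{2m}`, and for `d = 2m+1`,
`a_0 < a_1 < ⋯ < a_m = a_{m+1} > a_{m+2} > ⋯ > a_{2m+1}`. -/
def StrictlyUnimodalSeq (d : ℕ) (a : ℕ → ℝ) : Prop :=
  (∀ i, i < d / 2 → a i < a (i + 1)) ∧
  (Odd d → a (d / 2) = a (d / 2 + 1)) ∧
  (∀ i, (d + 1) / 2 ≤ i → i < d → a (i + 1) < a i)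

/-- The sequence `a` strictly increases on `[0, e]`, is constant on `[e, p]`,
and strictly decreases on `[p, D]`. -/
def IncConstDec (a : ℕ → ℝ) (e p D : ℕ) : Prop :=
  (∀ i, i < e → a i < a (i + 1)) ∧
  (∀ i, e ≤ i → i < p → a i = a (i + 1)) ∧
  (∀ i, p ≤ i → i < D → a (i + 1) < a i)

/-- Proposition: for `m ≥ 2` and `1 ≤ d_1 ≤ ⋯ ≤ d_m` with `D = d_1 + ⋯ + d_m`, the
polynomial `f = ∏ f_{d_i}` is symmetric, and either strictly unimodal or its coefficients
strictly increase until `d_1 + ⋯ + d_{m-1}`, are constant until `d_m`, then strictly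
decrease until `D`. -/
noncomputable def pext (p : Polynomial ℝ) : ℤ → ℝ :=
  fun j => if 0 ≤ j then p.coeff j.toNat else 0

lemma pext_natCast (p : Polynomial ℝ) (k : ℕ) : pext p (k : ℤ) = p.coeff k := by
  simp [pext]

lemma fpoly_coeff (n k : ℕ) : (fpoly n).coeff k = if k ≤ n then 1 else 0 := by
  rw [fpoly, finset_sum_coeff]
  simp only [coeff_X_pow]
  rw [Finset.sum_ite_eq (Finset.range (n+1)) k (fun _ => (1:ℝ))]
  simp [Nat.lt_succ_iff]

lemma pext_mul_fpoly (p : Polynomial ℝ) (n : ℕ) (j : ℤ) :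
    pext (p * fpoly n) j = ∑ i ∈ Finset.range (n + 1), pext p (j - i) := by
  rcases lt_or_ge j 0 with h | h
  · rw [pext, if_neg (by omega)]
    symm
    apply Finset.sum_eq_zero
    intro i _
    rw [pext, if_neg (by omega)]
  · lift j to ℕ using h with k
    rw [pext, if_pos (by positivity), Int.toNat_natCast]
    rw [fpoly, Finset.mul_sum, finset_sum_coeff]
    apply Finset.sum_congr rfl
    intro i _
    rw [coeff_mul_X_pow', pext]
    rcases le_or_gt i k with h1 | h1
    · rw [if_pos h1, if_pos (by omega)]
      congr 1
      omega
    · rw [if_neg (by omega), if_neg (by omega)]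

lemma sum_shift (G : ℤ → ℝ) (n : ℕ) (j : ℤ) :
    ∑ i ∈ Finset.range (n+1), G (j + 1 - i) =
      (∑ i ∈ Finset.range (n+1), G (j - i)) + G (j + 1) - G (j - n) := by
  rw [Finset.sum_range_succ' (fun i => G (j + 1 - i)), Finset.sum_range_succ (fun i => G (j - i))]
  have h : ∀ i : ℕ, j + 1 - ((i : ℕ) + 1 : ℕ) = j - i := by intro i; push_cast; ring
  rw [Finset.sum_congr rfl fun i _ => congrArg G (h i)]
  push_cast
  ring

structure CoefInv (F : ℤ → ℝ) (D e : ℕ) : Prop where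
  neg : ∀ j : ℤ, j < 0 → F j = 0
  symm : ∀ j : ℤ, F j = F ((D : ℤ) - j)
  nonneg : ∀ j : ℤ, 0 ≤ F j
  pos : ∀ j : ℤ, 0 ≤ j → j ≤ (D : ℤ) → 0 < F j
  incs : ∀ j : ℤ, 0 ≤ j → j < (e : ℤ) → F j < F (j + 1)
  const : ∀ j : ℤ, (e : ℤ) ≤ j → j < (D : ℤ) - (e : ℤ) → F j = F (j + 1)

namespace CoefInv

variable {F : ℤ → ℝ} {D e : ℕ}

lemma zero_of_gt (h : CoefInv F D e) (j : ℤ) (hj : (D : ℤ) < j) : F j = 0 := by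
  rw [h.symm j, h.neg _ (by omega)]

lemma mono (h : CoefInv F D e) (j : ℤ) (hj : 2 * j + 1 ≤ (D : ℤ)) : F j ≤ F (j + 1) := by
  rcases lt_or_ge j 0 with h0 | h0
  · rw [h.neg j h0]; exact h.nonneg _
  rcases lt_or_ge j (e : ℤ) with h1 | h1
  · exact (h.incs j h0 h1).le
  · exact (h.const j h1 (by omega)).le

lemma mono' (h : CoefInv F D e) (j1 j2 : ℤ) (h12 : j1 ≤ j2) (hj2 : 2 * j2 ≤ (D : ℤ) + 1) :
    F j1 ≤ F j2 := by
  exact Int.le_induction (motive := fun j _ => 2 * j ≤ (D : ℤ) + 1 → F j1 ≤ F j)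
    (fun _ => le_refl _)
    (fun n _ ih hb => le_trans (ih (by omega)) (h.mono n (by omega))) j2 h12 hj2

lemma strict (h : CoefInv F D e) (j1 j2 : ℤ) (h0 : 0 ≤ j1) (he : j1 < (e : ℤ))
    (h12 : j1 < j2) (hD : j1 < (D : ℤ) - j2) : F j1 < F j2 := by
  set j2' := min j2 ((D : ℤ) - j2) with hj2'
  have hF : F j2 = F j2' := by
    rcases min_cases j2 ((D : ℤ) - j2) with ⟨hmin, _⟩ | ⟨hmin, _⟩
    · rw [hj2', hmin]
    · rw [hj2', hmin]; exact h.symm j2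
  rw [hF]
  calc F j1 < F (j1 + 1) := h.incs j1 h0 he
    _ ≤ F j2' := h.mono' _ _ (by omega) (by omega)

end CoefInv

lemma key : ∀ m : ℕ, 1 ≤ m → ∀ d : ℕ → ℕ, (∀ i < m, 1 ≤ d i) →
    (∀ i j, i ≤ j → j < m → d i ≤ d j) →
    CoefInv (pext (∏ i ∈ Finset.range m, fpoly (d i))) (∑ i ∈ Finset.range m, d i)
      (min ((∑ i ∈ Finset.range m, d i) - d (m-1)) ((∑ i ∈ Finset.range m, d i) / 2)) := by
  intro m hm
  induction m, hm using Nat.le_induction with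
  | base =>
      intro d hd1 _
      simp only [Finset.prod_range_one, Finset.sum_range_one]
      have he : min (d 0 - d 0) (d 0 / 2) = 0 := by omega
      rw [he]
      refine ⟨?_, ?_, ?_, ?_, ?_, ?_⟩
      · intro j hj; rw [pext, if_neg (by omega)]
      · intro j
        simp only [pext, fpoly_coeff]
        split_ifs <;> first | rfl | (exfalso; omega)
      · intro j
        simp only [pext, fpoly_coeff]
        split_ifs <;> norm_num
      · intro j h0 hj
        simp only [pext, fpoly_coeff]
        rw [if_pos h0, if_pos (by omega)]
        norm_num
      · intro j h0 hj
        exact absurd hj (by omega)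
      · intro j h1 h2
        simp only [pext, fpoly_coeff]
        split_ifs <;> first | rfl | (exfalso; omega)
  | succ m hm ih =>
      intro d hd1 hmono
      have hprod : ∏ i ∈ Finset.range (m+1), fpoly (d i)
          = (∏ i ∈ Finset.range m, fpoly (d i)) * fpoly (d m) := Finset.prod_range_succ _ _
      have hsum : ∑ i ∈ Finset.range (m+1), d i = (∑ i ∈ Finset.range m, d i) + d m :=
        Finset.sum_range_succ _ _
      set n := d m with hn
      set E := ∑ i ∈ Finset.range m, d i with hE
      set eg := min (E - d (m-1)) (E/2) with heg
      have hg : CoefInv (pext (∏ i ∈ Finset.range m, fpoly (d i))) E eg :=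
        ih d (fun i hi => hd1 i (by omega)) (fun i j hij hj => hmono i j hij (by omega))
      set G := pext (∏ i ∈ Finset.range m, fpoly (d i)) with hGdef
      have hd' : d (m-1) ≤ n := hmono (m-1) m (by omega) (by omega)
      have hdE : d (m-1) ≤ E := by
        rw [hE]
        exact Finset.single_le_sum (f := d) (fun i _ => Nat.zero_le _)
          (Finset.mem_range.mpr (by omega))
      have hn1 : 1 ≤ n := hd1 m (by omega)
      set F := pext (∏ i ∈ Finset.range (m+1), fpoly (d i)) with hFdef
      have Frep : ∀ j : ℤ, F j = ∑ i ∈ Finset.range (n+1), G (j - i) := by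
        intro j
        rw [hFdef, hprod]
        exact pext_mul_fpoly _ _ _
      have Fdiff : ∀ j : ℤ, F (j + 1) = F j + G (j + 1) - G (j - n) := by
        intro j
        rw [Frep, Frep, sum_shift]
      have hgoalE : ∑ i ∈ Finset.range (m+1), d i = E + n := hsum
      rw [show m + 1 - 1 = m from rfl, hgoalE, show E + n - n = E by omega]
      refine ⟨?_, ?_, ?_, ?_, ?_, ?_⟩
      · intro j hj
        rw [hFdef, pext, if_neg (by omega)]
      · intro j
        rw [Frep j, Frep ((E + n : ℕ) - j)]
        rw [← Finset.sum_range_reflect (fun i => G (((E+n : ℕ) : ℤ) - j - i)) (n+1)]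
        apply Finset.sum_congr rfl
        intro i hi
        have hi' : i < n + 1 := Finset.mem_range.mp hi
        rw [hg.symm (j - (i : ℤ))]
        congr 1
        push_cast
        omega
      · intro j
        rw [Frep]
        exact Finset.sum_nonneg fun i _ => hg.nonneg _
      · intro j h0 hD
        lift j to ℕ using h0 with k
        rw [Frep]
        apply Finset.sum_pos' (fun i _ => hg.nonneg _)
        refine ⟨k - E, Finset.mem_range.mpr (by omega), ?_⟩
        apply hg.pos <;> omega
      · intro j h0 hj
        lift j to ℕ using h0 with k
        have hk : k < min E ((E+n)/2) := by exact_mod_cast hj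
        rw [Fdiff]
        rcases lt_or_ge k n with hkn | hkn
        · rw [hg.neg ((k : ℤ) - n) (by omega)]
          have hpos : (0:ℝ) < G ((k : ℤ) + 1) := hg.pos _ (by omega) (by omega)
          linarith
        · have h1 : G ((k : ℤ) - n) < G ((k : ℤ) + 1) := by
            apply hg.strict <;> omega
          linarith
      · intro j h1 h2
        have hGG : G (j + 1) = G (j - (n : ℤ)) := by
          rcases le_or_gt (E : ℤ) j with hEj | hEj
          · rw [hg.zero_of_gt (j+1) (by omega), hg.neg (j - n) (by omega)]
          · rw [hg.symm (j + 1)]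
            congr 1
            omega
        rw [Fdiff j, hGG]
        ring

theorem prod_fpoly_symmetric_and_unimodal_or_plateau (m : ℕ) (hm : 2 ≤ m) (d : ℕ → ℕ)
    (hd1 : ∀ i < m, 1 ≤ d i) (hmono : ∀ i j, i ≤ j → j < m → d i ≤ d j) :
    (∀ i ≤ ∑ i ∈ Finset.range m, d i,
        (∏ i ∈ Finset.range m, fpoly (d i)).coeff i =
          (∏ i ∈ Finset.range m, fpoly (d i)).coeff ((∑ i ∈ Finset.range m, d i) - i)) ∧
    (StrictlyUnimodalSeq (∑ i ∈ Finset.range m, d i)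
        ((∏ i ∈ Finset.range m, fpoly (d i)).coeff) ∨
      IncConstDec ((∏ i ∈ Finset.range m, fpoly (d i)).coeff)
        (∑ i ∈ Finset.range (m - 1), d i) (d (m - 1)) (∑ i ∈ Finset.range m, d i)) := by
  have hkey := key m (by omega) d hd1 hmono
  set D := ∑ i ∈ Finset.range m, d i with hD
  set f := ∏ i ∈ Finset.range m, fpoly (d i) with hf
  set e := min (D - d (m-1)) (D / 2) with he
  have hcoe : ∀ k : ℕ, pext f (k : ℤ) = f.coeff k := fun k => pext_natCast f k
  have hcoe' : ∀ k : ℕ, pext f ((k : ℤ) + 1) = f.coeff (k+1) := by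
    intro k
    rw [show ((k:ℤ) + 1) = ((k+1 : ℕ) : ℤ) by push_cast; ring, hcoe]
  have hdm : d (m-1) ≤ D := by
    rw [hD]
    exact Finset.single_le_sum (fun i _ => Nat.zero_le _) (Finset.mem_range.mpr (by omega))
  have hEsum : ∑ i ∈ Finset.range (m-1), d i = D - d (m-1) := by
    have h : D = (∑ i ∈ Finset.range (m-1), d i) + d (m-1) := by
      rw [hD, show m = (m-1) + 1 by omega, Finset.sum_range_succ]
      simp [show m - 1 + 1 - 1 = m - 1 by omega]
    omega
  constructor
  · intro i hi
    rw [← hcoe i, ← hcoe (D - i), hkey.symm (i : ℤ)]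
    congr 1
    omega
  · rcases le_total (D - d (m-1)) (D / 2) with hcase | hcase
    · right
      refine ⟨?_, ?_, ?_⟩
      · intro i hi
        rw [← hcoe i, ← hcoe' i]
        exact hkey.incs (i : ℤ) (by omega) (by rw [hEsum] at hi; omega)
      · intro i h1 h2
        rw [← hcoe i, ← hcoe' i]
        rw [hEsum] at h1
        exact hkey.const (i : ℤ) (by omega) (by omega)
      · intro i h1 h2
        have h := hkey.incs ((D - 1 - i : ℕ) : ℤ) (by omega) (by omega)
        have e1 : f.coeff (i+1) = pext f ((D - 1 - i : ℕ) : ℤ) := by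
          rw [← hcoe' i, hkey.symm ((i : ℤ) + 1)]
          congr 1
          omega
        have e2 : f.coeff i = pext f (((D - 1 - i : ℕ) : ℤ) + 1) := by
          rw [← hcoe i, hkey.symm (i : ℤ)]
          congr 1
          omega
        rw [e1, e2]
        exact h
    · left
      refine ⟨?_, ?_, ?_⟩
      · intro i hi
        rw [← hcoe i, ← hcoe' i]
        exact hkey.incs (i : ℤ) (by omega) (by omega)
      · intro hodd
        obtain ⟨t, ht⟩ := hodd
        rw [← hcoe (D/2), ← hcoe' (D/2)]
        exact hkey.const ((D/2 : ℕ) : ℤ) (by omega) (by omega)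
      · intro i h1 h2
        have h := hkey.incs ((D - 1 - i : ℕ) : ℤ) (by omega) (by omega)
        have e1 : f.coeff (i+1) = pext f ((D - 1 - i : ℕ) : ℤ) := by
          rw [← hcoe' i, hkey.symm ((i : ℤ) + 1)]
          congr 1
          omega
        have e2 : f.coeff i = pext f (((D - 1 - i : ℕ) : ℤ) + 1) := by
          rw [← hcoe i, hkey.symm (i : ℤ)]
          congr 1
          omega
        rw [e1, e2]
        exact h
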